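/- Let a = a_1∘⋯∘a_n ∈ X* be a complete block containing no left invertible letters. Then GP[a] = ⋂_{1 ≤ i ≤ n} GP[a_i]. -/

import Mathlib

/-! Common definitions for graph products of monoids. -/

variable {V : Type*}

/-- A letter of the graph product alphabet: an element of one of the vertex monoids,
tagged by its vertex (its *support*). -/
abbrev GPLetter (M : V → Type*) : Type _ := (α : V) × M α

/-- The defining relations of the graph product: identity letters are trivial,
letters from the same vertex monoid multiply, and letters at adjacent vertices commute. -/
def gpRel (G : SimpleGraph V) (M : V → Type*) [∀ α, Monoid (M α)] :
    FreeMonoid (GPLetter M) → FreeMonoid (GPLetter M) → Prop := fun w₁ w₂ =>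
  (∃ α : V, w₁ = FreeMonoid.of (⟨α, (1 : M α)⟩ : GPLetter M) ∧ w₂ = 1) ∨
  (∃ (α : V) (x y : M α),
      w₁ = FreeMonoid.of (⟨α, x⟩ : GPLetter M) * FreeMonoid.of (⟨α, y⟩ : GPLetter M) ∧
      w₂ = FreeMonoid.of (⟨α, x * y⟩ : GPLetter M)) ∨
  (∃ (α β : V) (x : M α) (y : M β), G.Adj α β ∧
      w₁ = FreeMonoid.of (⟨α, x⟩ : GPLetter M) * FreeMonoid.of (⟨β, y⟩ : GPLetter M) ∧
      w₂ = FreeMonoid.of (⟨β, y⟩ : GPLetter M) * FreeMonoid.of (⟨α, x⟩ : GPLetter M))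

/-- The congruence on the free monoid generated by the graph product relations. -/
def gpCon (G : SimpleGraph V) (M : V → Type*) [∀ α, Monoid (M α)] :
    Con (FreeMonoid (GPLetter M)) := conGen (gpRel G M)

/-- The graph product of the monoids `M α` with respect to the graph `G`. -/
abbrev GraphProduct (G : SimpleGraph V) (M : V → Type*) [∀ α, Monoid (M α)] :=
  (gpCon G M).Quotient

/-- The class `[w]` in the graph product of a word `w` (given as a list of letters). -/
def gpMk (G : SimpleGraph V) (M : V → Type*) [∀ α, Monoid (M α)]
    (l : List (GPLetter M)) : GraphProduct G M :=
  (gpCon G M).mk' (FreeMonoid.ofList l)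

/-- A word is reduced: no letter is an identity, and between any two letters with the
same support there is a letter whose support is not adjacent to it. -/
def GPReduced (G : SimpleGraph V) (M : V → Type*) [∀ α, Monoid (M α)]
    (l : List (GPLetter M)) : Prop :=
  (∀ x ∈ l, x.2 ≠ 1) ∧
    ∀ i j : Fin l.length, i < j → (l.get i).1 = (l.get j).1 →
      ∃ k : Fin l.length, i < k ∧ k < j ∧ ¬ G.Adj (l.get i).1 (l.get k).1

/-- One shuffle: transpose an adjacent pair of letters whose supports are adjacent in `G`. -/
def ShuffleStep (G : SimpleGraph V) (M : V → Type*)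
    (l₁ l₂ : List (GPLetter M)) : Prop :=
  ∃ (u v : List (GPLetter M)) (x y : GPLetter M),
    G.Adj x.1 y.1 ∧ l₁ = u ++ x :: y :: v ∧ l₂ = u ++ y :: x :: v

/-- Two words are shuffle equivalent if one is obtained from the other by a finite
sequence of shuffles. -/
def ShuffleEquiv (G : SimpleGraph V) (M : V → Type*) :
    List (GPLetter M) → List (GPLetter M) → Prop :=
  Relation.ReflTransGen (ShuffleStep G M)

/-- A letter is left invertible if it is left invertible in its vertex monoid. -/
def LeftInvertibleLetter (M : V → Type*) [∀ α, Monoid (M α)] (x : GPLetter M) : Prop :=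
  ∃ y : M x.1, y * x.2 = 1

/-- The set of supports of the letters of a word. -/
def suppSet (M : V → Type*) (l : List (GPLetter M)) : Set V := {α | ∃ x ∈ l, x.1 = α}

/-- A complete block: a reduced word whose support induces a complete subgraph of `G`. -/
def CompleteBlock (G : SimpleGraph V) (M : V → Type*) [∀ α, Monoid (M α)]
    (l : List (GPLetter M)) : Prop :=
  GPReduced G M l ∧ ∀ x ∈ l, ∀ y ∈ l, x.1 ≠ y.1 → G.Adj x.1 y.1

/-- A list of blocks is a left Foata normal form: the concatenation is reduced, each
block is nonempty with complete support, and each letter of a block fails to be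
adjacent to some letter of the preceding block. -/
def LeftFoataForm (G : SimpleGraph V) (M : V → Type*) [∀ α, Monoid (M α)]
    (blocks : List (List (GPLetter M))) : Prop :=
  GPReduced G M blocks.flatten ∧
  (∀ b ∈ blocks, b ≠ [] ∧ ∀ x ∈ b, ∀ y ∈ b, x.1 ≠ y.1 → G.Adj x.1 y.1) ∧
  List.Chain' (fun b₁ b₂ => ∀ y ∈ b₂, ∃ x ∈ b₁, ¬ G.Adj x.1 y.1) blocks

/-- The principal left ideal `S a = {s * a : s ∈ S}` of a monoid. -/
def plIdeal {S : Type*} [Monoid S] (a : S) : Set S := Set.range (· * a)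

/-- The ascending chain condition on principal left ideals. -/
def ACCPL (S : Type*) [Monoid S] : Prop :=
  ∀ a : ℕ → S, (∀ n, plIdeal (a n) ⊆ plIdeal (a (n + 1))) →
    ∃ n, ∀ k, plIdeal (a (n + k)) = plIdeal (a n)

/-- `A` is a left ideal of the monoid `S`. -/
def IsLeftIdeal {S : Type*} [Monoid S] (A : Set S) : Prop :=
  A.Nonempty ∧ ∀ s : S, ∀ a ∈ A, s * a ∈ A

/-- `A` is generated, as a left ideal, by a finite subset of itself. -/
def IsFGLeftIdeal {S : Type*} [Monoid S] (A : Set S) : Prop :=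
  ∃ F : Finset S, ↑F ⊆ A ∧ A = {x | ∃ s : S, ∃ a ∈ F, x = s * a}

/-- A monoid is weakly left noetherian if every left ideal is finitely generated. -/
def WeaklyLeftNoetherian (S : Type*) [Monoid S] : Prop :=
  ∀ A : Set S, IsLeftIdeal A → IsFGLeftIdeal A

/-- A monoid is left ideal Howson if the intersection of any two principal left ideals
is empty or finitely generated. -/
def LeftIdealHowson (S : Type*) [Monoid S] : Prop :=
  ∀ a b : S, plIdeal a ∩ plIdeal b = ∅ ∨ IsFGLeftIdeal (plIdeal a ∩ plIdeal b)

/-- An LCM monoid: intersections of principal left ideals are empty or principal. -/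
def LCMMonoid (S : Type*) [Monoid S] : Prop :=
  ∀ a b : S, plIdeal a ∩ plIdeal b = ∅ ∨ ∃ c : S, plIdeal a ∩ plIdeal b = plIdeal c

/-- A left congruence on a monoid. -/
def IsLeftCongruence {S : Type*} [Monoid S] (ρ : S → S → Prop) : Prop :=
  Equivalence ρ ∧ ∀ u s t : S, ρ s t → ρ (u * s) (u * t)

/-- The least left congruence containing a set of pairs. -/
def leftConGen {S : Type*} [Monoid S] (R : Set (S × S)) : S → S → Prop := fun s t =>
  ∀ ρ : S → S → Prop, IsLeftCongruence ρ → (∀ p ∈ R, ρ p.1 p.2) → ρ s t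

/-- A monoid is finitely left equated if every left annihilator `l(a)` is the left
congruence generated by a finite set. -/
def FinitelyLeftEquated (S : Type*) [Monoid S] : Prop :=
  ∀ a : S, ∃ R : Set (S × S), R.Finite ∧ ∀ s t : S, s * a = t * a ↔ leftConGen R s t

/-- A monoid is a group: every element has a two-sided inverse. -/
def IsGroupMonoid (S : Type*) [Monoid S] : Prop :=
  ∀ a : S, ∃ b : S, a * b = 1 ∧ b * a = 1

/-- Weakly left coherent: left ideal Howson and finitely left equated. -/
def WeaklyLeftCoherent (S : Type*) [Monoid S] : Prop :=
  LeftIdealHowson S ∧ FinitelyLeftEquated S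

/-- The restricted direct product of a family of monoids: elements of the direct
product with only finitely many non-identity coordinates. -/
def restrictedDirectProduct {ι : Type*} (M : ι → Type*) [∀ i, Monoid (M i)] :
    Submonoid (∀ i, M i) where
  carrier := {f | {i | f i ≠ 1}.Finite}
  one_mem' := by simp
  mul_mem' := by
    intro f g hf hg
    refine Set.Finite.subset (hf.union hg) ?_
    intro i hi
    rw [Set.mem_union]
    by_contra h
    push_neg at h
    obtain ⟨h1, h2⟩ := h
    simp only [Set.mem_setOf_eq, not_not] at h1 h2
    apply hi
    show f i * g i = 1
    rw [h1, h2, one_mul]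

/-- Condition (i) for relative completeness: both monoids have two elements, at least
one is not a group, and both vertices are adjacent to every other vertex. -/
def RCcondI (G : SimpleGraph V) (M : V → Type*) [∀ α, Monoid (M α)]
    (α β : V) : Prop :=
  Nat.card (M α) = 2 ∧ Nat.card (M β) = 2 ∧
  (¬ IsGroupMonoid (M α) ∨ ¬ IsGroupMonoid (M β)) ∧
  ∀ γ : V, γ ≠ α → γ ≠ β → G.Adj α γ ∧ G.Adj β γ

/-- `G` is relatively complete with respect to the family `M` of vertex monoids. -/
def RelativelyComplete (G : SimpleGraph V) (M : V → Type*)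
    [∀ α, Monoid (M α)] : Prop :=
  (∀ α β : V, α ≠ β → ¬ G.Adj α β →
      RCcondI G M α β ∨ (IsGroupMonoid (M α) ∧ IsGroupMonoid (M β))) ∧
  ∀ α β α' β' : V, α ≠ β → ¬ G.Adj α β → RCcondI G M α β →
    α' ≠ β' → ¬ G.Adj α' β' → RCcondI G M α' β' →
    (α = α' ∧ β = β') ∨ (α = β' ∧ β = α')

namespace Stmt5
open scoped Classical

variable (G : SimpleGraph V) (M : V → Type*) [∀ α, Monoid (M α)]

/-- image of a letter in the graph product -/
noncomputable def e (x : GPLetter M) : GraphProduct G M := (gpCon G M).mk' (FreeMonoid.of x)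

lemma mk'_eq_of_rel {w₁ w₂} (h : gpRel G M w₁ w₂) :
    (gpCon G M).mk' w₁ = (gpCon G M).mk' w₂ := by
  exact (Con.eq _).mpr (ConGen.Rel.of _ _ h)

lemma e_one (α : V) : e G M ⟨α, (1 : M α)⟩ = 1 := by
  have := mk'_eq_of_rel G M (w₁ := FreeMonoid.of (⟨α, (1:M α)⟩ : GPLetter M)) (w₂ := 1)
    (Or.inl ⟨α, rfl, rfl⟩)
  simpa [e] using this

lemma e_mul (α : V) (x y : M α) :
    e G M ⟨α, x⟩ * e G M ⟨α, y⟩ = e G M ⟨α, x * y⟩ := by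
  have := mk'_eq_of_rel G M (Or.inr (Or.inl ⟨α, x, y, rfl, rfl⟩))
  simpa [e] using this

lemma e_comm {x y : GPLetter M} (h : G.Adj x.1 y.1) :
    e G M x * e G M y = e G M y * e G M x := by
  obtain ⟨α, xm⟩ := x
  obtain ⟨β, ym⟩ := y
  have := mk'_eq_of_rel G M (Or.inr (Or.inr ⟨α, β, xm, ym, h, rfl, rfl⟩))
  simpa [e] using this

/-- Multiply a reduced word (stored REVERSED: head = last letter) on the right by a letter. -/
noncomputable def rmul : GPLetter M → List (GPLetter M) → List (GPLetter M)
  | x, [] => [x]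
  | x, ⟨β, zm⟩ :: t =>
    if h : β = x.1 then
      (if (h ▸ zm) * x.2 = 1 then t else ⟨x.1, (h ▸ zm) * x.2⟩ :: t)
    else if G.Adj x.1 β then ⟨β, zm⟩ :: rmul x t
    else x :: ⟨β, zm⟩ :: t

noncomputable def step (t : List (GPLetter M)) (x : GPLetter M) : List (GPLetter M) :=
  if x.2 = 1 then t else rmul G M x t

lemma rmul_nil (x : GPLetter M) : rmul G M x [] = [x] := rfl

lemma rmul_cons_same (α : V) (xm zm : M α) (t : List (GPLetter M)) :
    rmul G M ⟨α, xm⟩ (⟨α, zm⟩ :: t)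
      = if zm * xm = 1 then t else ⟨α, zm * xm⟩ :: t := by
  simp [rmul]

lemma rmul_cons_pass {β : V} (x : GPLetter M) (zm : M β) (t : List (GPLetter M))
    (hne : β ≠ x.1) (hadj : G.Adj x.1 β) :
    rmul G M x (⟨β, zm⟩ :: t) = ⟨β, zm⟩ :: rmul G M x t := by
  simp [rmul, hne, hadj]

lemma rmul_cons_stop {β : V} (x : GPLetter M) (zm : M β) (t : List (GPLetter M))
    (hne : β ≠ x.1) (hadj : ¬ G.Adj x.1 β) :
    rmul G M x (⟨β, zm⟩ :: t) = x :: ⟨β, zm⟩ :: t := by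
  simp [rmul, hne, hadj]

/-- No letter of support `α` is reachable from the head through adjacent letters. -/
def BlockedR (α : V) : List (GPLetter M) → Prop
  | [] => True
  | z :: t => z.1 ≠ α ∧ (¬ G.Adj α z.1 ∨ BlockedR α t)

/-- Internal reducedness predicate on reversed words. -/
def RedR : List (GPLetter M) → Prop
  | [] => True
  | z :: t => z.2 ≠ 1 ∧ BlockedR G M z.1 t ∧ RedR t

/-- A letter right-divisible by `b` is reachable from the head through letters adjacent to
`b.1`. -/
def QR (b : GPLetter M) : List (GPLetter M) → Prop
  | [] => False
  | z :: t => (∃ h : z.1 = b.1, ∃ c : M b.1, h ▸ z.2 = c * b.2) ∨ (G.Adj b.1 z.1 ∧ QR b t)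

/-- value in the graph product of a reversed word -/
noncomputable def val : List (GPLetter M) → GraphProduct G M
  | [] => 1
  | z :: t => val t * e G M z

local notation t " ~ " t' => ShuffleEquiv G M t t'

lemma shuffleStep_symm {t t' : List (GPLetter M)} (h : ShuffleStep G M t t') :
    ShuffleStep G M t' t := by
  obtain ⟨u, v, x, y, hadj, h1, h2⟩ := h
  exact ⟨u, v, y, x, hadj.symm, h2, h1⟩

lemma shuffleEquiv_symm {t t' : List (GPLetter M)} (h : t ~ t') : t' ~ t :=
  by
    induction h with
    | refl => exact Relation.ReflTransGen.refl
    | tail _ h2 ih => exact Relation.ReflTransGen.head (shuffleStep_symm G M h2) ih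

lemma shuffleStep_cons {t t' : List (GPLetter M)} (z : GPLetter M)
    (h : ShuffleStep G M t t') : ShuffleStep G M (z :: t) (z :: t') := by
  obtain ⟨u, v, x, y, hadj, h1, h2⟩ := h
  exact ⟨z :: u, v, x, y, hadj, by simp [h1], by simp [h2]⟩

lemma shuffleEquiv_cons {t t' : List (GPLetter M)} (z : GPLetter M)
    (h : t ~ t') : (z :: t) ~ (z :: t') := by
  induction h with
  | refl => exact Relation.ReflTransGen.refl
  | tail _ h2 ih => exact ih.tail (shuffleStep_cons G M z h2)

lemma shuffleStep_swap {x y : GPLetter M} (v : List (GPLetter M)) (h : G.Adj x.1 y.1) :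
    ShuffleStep G M (x :: y :: v) (y :: x :: v) := ⟨[], v, x, y, h, rfl, rfl⟩

lemma val_rmul (x : GPLetter M) (t : List (GPLetter M)) :
    val G M (rmul G M x t) = val G M t * e G M x := by
  induction t with
  | nil => simp [rmul, val]
  | cons z t ih =>
    obtain ⟨β, zm⟩ := z
    obtain ⟨α, xm⟩ := x
    by_cases hβ : β = α
    · subst hβ
      rw [rmul_cons_same]
      by_cases h1 : zm * xm = 1
      · rw [if_pos h1]
        show val G M t = val G M t * e G M ⟨β, zm⟩ * e G M ⟨β, xm⟩
        rw [mul_assoc, e_mul, h1, e_one, mul_one]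
      · rw [if_neg h1]
        show val G M t * e G M ⟨β, zm * xm⟩
            = val G M t * e G M ⟨β, zm⟩ * e G M ⟨β, xm⟩
        rw [mul_assoc, e_mul]
    · by_cases hadj : G.Adj α β
      · rw [rmul_cons_pass G M ⟨α, xm⟩ zm t hβ hadj]
        show val G M (rmul G M ⟨α, xm⟩ t) * e G M ⟨β, zm⟩
            = val G M t * e G M ⟨β, zm⟩ * e G M ⟨α, xm⟩
        rw [ih, mul_assoc, mul_assoc,
          e_comm G M (x := (⟨α, xm⟩ : GPLetter M)) (y := (⟨β, zm⟩ : GPLetter M)) hadj]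
      · rw [rmul_cons_stop G M ⟨α, xm⟩ zm t hβ hadj]
        rfl

lemma val_step (t : List (GPLetter M)) (x : GPLetter M) :
    val G M (step G M t x) = val G M t * e G M x := by
  unfold step
  by_cases h : x.2 = 1
  · rw [if_pos h]
    obtain ⟨α, xm⟩ := x
    simp only at h
    rw [h, e_one, mul_one]
  · rw [if_neg h, val_rmul]

lemma blocked_rmul {α β : V} (hadj : G.Adj α β) (x : M α) {t : List (GPLetter M)}
    (hb : BlockedR G M β t) : BlockedR G M β (rmul G M ⟨α, x⟩ t) := by
  have hne_ab : α ≠ β := G.ne_of_adj hadj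
  have hadj_ba : G.Adj β α := hadj.symm
  induction t with
  | nil => exact ⟨hne_ab, Or.inr trivial⟩
  | cons z t ih =>
    obtain ⟨γ, zm⟩ := z
    obtain ⟨hne, hdisj⟩ := hb
    simp only at hne
    by_cases hγ : γ = α
    · subst hγ
      have hbt : BlockedR G M β t := by
        rcases hdisj with h | h
        · exact absurd hadj_ba h
        · exact h
      rw [rmul_cons_same]
      by_cases h1 : zm * x = 1
      · rw [if_pos h1]; exact hbt
      · rw [if_neg h1]; exact ⟨hne_ab, Or.inr hbt⟩
    · by_cases hadj2 : G.Adj α γ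
      · rw [rmul_cons_pass G M ⟨α, x⟩ zm t hγ hadj2]
        refine ⟨hne, ?_⟩
        rcases hdisj with h | h
        · exact Or.inl h
        · exact Or.inr (ih h)
      · rw [rmul_cons_stop G M ⟨α, x⟩ zm t hγ hadj2]
        exact ⟨hne_ab, Or.inr ⟨hne, hdisj⟩⟩

lemma red_rmul {α : V} {x : M α} (hx : x ≠ 1) {t : List (GPLetter M)}
    (ht : RedR G M t) : RedR G M (rmul G M ⟨α, x⟩ t) := by
  induction t with
  | nil => exact ⟨hx, trivial, trivial⟩
  | cons z t ih =>
    obtain ⟨γ, zm⟩ := z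
    obtain ⟨hz1, hbl, hrt⟩ := ht
    simp only at hz1 hbl
    by_cases hγ : γ = α
    · subst hγ
      rw [rmul_cons_same]
      by_cases h1 : zm * x = 1
      · rw [if_pos h1]; exact hrt
      · rw [if_neg h1]; exact ⟨h1, hbl, hrt⟩
    · by_cases hadj : G.Adj α γ
      · rw [rmul_cons_pass G M ⟨α, x⟩ zm t hγ hadj]
        exact ⟨hz1, blocked_rmul G M hadj x hbl, ih hrt⟩
      · rw [rmul_cons_stop G M ⟨α, x⟩ zm t hγ hadj]
        exact ⟨hx, ⟨hγ, Or.inl hadj⟩, hz1, hbl, hrt⟩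

lemma red_step {t : List (GPLetter M)} (ht : RedR G M t) (x : GPLetter M) :
    RedR G M (step G M t x) := by
  unfold step
  by_cases h : x.2 = 1
  · rwa [if_pos h]
  · rw [if_neg h]
    obtain ⟨α, xm⟩ := x
    exact red_rmul G M h ht

lemma rmul_of_blocked {α : V} (x : M α) {t : List (GPLetter M)}
    (hb : BlockedR G M α t) : ShuffleEquiv G M (rmul G M ⟨α, x⟩ t) (⟨α, x⟩ :: t) := by
  induction t with
  | nil => exact Relation.ReflTransGen.refl
  | cons z t ih =>
    obtain ⟨γ, zm⟩ := z
    obtain ⟨hne, hdisj⟩ := hb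
    simp only at hne
    by_cases hadj : G.Adj α γ
    · have hbt : BlockedR G M α t := by
        rcases hdisj with h | h
        · exact absurd hadj h
        · exact h
      rw [rmul_cons_pass G M ⟨α, x⟩ zm t hne hadj]
      refine Relation.ReflTransGen.tail (shuffleEquiv_cons G M _ (ih hbt)) ?_
      exact shuffleStep_symm G M
        (shuffleStep_swap G M (x := ⟨α, x⟩) (y := ⟨γ, zm⟩) t hadj)
    · rw [rmul_cons_stop G M ⟨α, x⟩ zm t hne hadj]
      exact Relation.ReflTransGen.refl

lemma rmul_shuffleStep (x : GPLetter M) (u v : List (GPLetter M)) (aL bL : GPLetter M)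
    (hadj : G.Adj aL.1 bL.1) :
    ShuffleEquiv G M (rmul G M x (u ++ aL :: bL :: v)) (rmul G M x (u ++ bL :: aL :: v)) := by
  obtain ⟨α, xm⟩ := x
  induction u with
  | nil =>
    obtain ⟨γa, am⟩ := aL
    obtain ⟨γb, bm⟩ := bL
    simp only at hadj
    simp only [List.nil_append]
    by_cases hga : γa = α
    · subst hga
      have hgb : γb ≠ γa := fun h => (G.ne_of_adj hadj) h.symm
      have hab : G.Adj γa γb := hadj
      rw [rmul_cons_same, rmul_cons_pass G M ⟨γa, xm⟩ bm _ hgb hab, rmul_cons_same]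
      by_cases h1 : am * xm = 1
      · rw [if_pos h1, if_pos h1]
        exact Relation.ReflTransGen.refl
      · rw [if_neg h1, if_neg h1]
        exact Relation.ReflTransGen.single
          (shuffleStep_swap G M (x := ⟨γa, am * xm⟩) (y := ⟨γb, bm⟩) v hab)
    · by_cases hgb : γb = α
      · subst hgb
        have hba : G.Adj γb γa := hadj.symm
        rw [rmul_cons_pass G M ⟨γb, xm⟩ am _ hga hba, rmul_cons_same, rmul_cons_same]
        by_cases h1 : bm * xm = 1
        · rw [if_pos h1, if_pos h1]
          exact Relation.ReflTransGen.refl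
        · rw [if_neg h1, if_neg h1]
          exact Relation.ReflTransGen.single
            (shuffleStep_swap G M (x := ⟨γa, am⟩) (y := ⟨γb, bm * xm⟩) v hadj)
      · by_cases haa : G.Adj α γa <;> by_cases hab : G.Adj α γb
        · rw [rmul_cons_pass G M ⟨α, xm⟩ am _ hga haa,
            rmul_cons_pass G M ⟨α, xm⟩ bm _ hgb hab,
            rmul_cons_pass G M ⟨α, xm⟩ bm _ hgb hab,
            rmul_cons_pass G M ⟨α, xm⟩ am _ hga haa]
          exact Relation.ReflTransGen.single
            (shuffleStep_swap G M (x := ⟨γa, am⟩) (y := ⟨γb, bm⟩) _ hadj)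
        · rw [rmul_cons_pass G M ⟨α, xm⟩ am _ hga haa,
            rmul_cons_stop G M ⟨α, xm⟩ bm _ hgb hab,
            rmul_cons_stop G M ⟨α, xm⟩ bm _ hgb hab]
          refine Relation.ReflTransGen.head
            (shuffleStep_swap G M (x := ⟨γa, am⟩) (y := ⟨α, xm⟩) _ haa.symm) ?_
          exact shuffleEquiv_cons G M _ (Relation.ReflTransGen.single
            (shuffleStep_swap G M (x := ⟨γa, am⟩) (y := ⟨γb, bm⟩) _ hadj))
        · rw [rmul_cons_stop G M ⟨α, xm⟩ am _ hga haa,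
            rmul_cons_pass G M ⟨α, xm⟩ bm _ hgb hab,
            rmul_cons_stop G M ⟨α, xm⟩ am _ hga haa]
          refine shuffleEquiv_symm G M ?_
          refine Relation.ReflTransGen.head
            (shuffleStep_swap G M (x := ⟨γb, bm⟩) (y := ⟨α, xm⟩) _ hab.symm) ?_
          exact shuffleEquiv_cons G M _ (Relation.ReflTransGen.single
            (shuffleStep_swap G M (x := ⟨γb, bm⟩) (y := ⟨γa, am⟩) _ hadj.symm))
        · rw [rmul_cons_stop G M ⟨α, xm⟩ am _ hga haa,
            rmul_cons_stop G M ⟨α, xm⟩ bm _ hgb hab]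
          exact shuffleEquiv_cons G M _ (Relation.ReflTransGen.single
            (shuffleStep_swap G M (x := ⟨γa, am⟩) (y := ⟨γb, bm⟩) _ hadj))
  | cons c u ih =>
    obtain ⟨γ, cm⟩ := c
    have base : ShuffleStep G M (u ++ aL :: bL :: v) (u ++ bL :: aL :: v) :=
      ⟨u, v, aL, bL, hadj, rfl, rfl⟩
    simp only [List.cons_append]
    by_cases hγ : γ = α
    · subst hγ
      rw [rmul_cons_same, rmul_cons_same]
      by_cases h1 : cm * xm = 1
      · rw [if_pos h1, if_pos h1]
        exact Relation.ReflTransGen.single base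
      · rw [if_neg h1, if_neg h1]
        exact Relation.ReflTransGen.single (shuffleStep_cons G M _ base)
    · by_cases hadj2 : G.Adj α γ
      · rw [rmul_cons_pass G M ⟨α, xm⟩ cm _ hγ hadj2,
          rmul_cons_pass G M ⟨α, xm⟩ cm _ hγ hadj2]
        exact shuffleEquiv_cons G M _ ih
      · rw [rmul_cons_stop G M ⟨α, xm⟩ cm _ hγ hadj2,
          rmul_cons_stop G M ⟨α, xm⟩ cm _ hγ hadj2]
        exact shuffleEquiv_cons G M _ (shuffleEquiv_cons G M _
          (Relation.ReflTransGen.single base))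

lemma step_shuffle {t t' : List (GPLetter M)} (h : ShuffleEquiv G M t t')
    (x : GPLetter M) : ShuffleEquiv G M (step G M t x) (step G M t' x) := by
  unfold step
  by_cases hx : x.2 = 1
  · rwa [if_pos hx, if_pos hx]
  · rw [if_neg hx, if_neg hx]
    induction h with
    | refl => exact Relation.ReflTransGen.refl
    | tail _ h2 ih =>
      obtain ⟨u, v, aL, bL, hadj, h1, h2'⟩ := h2
      subst h1; subst h2'
      exact ih.trans (rmul_shuffleStep G M x u v aL bL hadj)

lemma rmul_rmul {α : V} (x y : M α) (hx : x ≠ 1) (hy : y ≠ 1) {t : List (GPLetter M)}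
    (ht : RedR G M t) :
    ShuffleEquiv G M (rmul G M ⟨α, y⟩ (rmul G M ⟨α, x⟩ t)) (step G M t ⟨α, x * y⟩) := by
  induction t with
  | nil =>
    rw [rmul_nil, rmul_cons_same]
    unfold step
    by_cases hxy : x * y = 1
    · rw [if_pos hxy]
      simp only [hxy, if_pos rfl]
      exact Relation.ReflTransGen.refl
    · rw [if_neg hxy]
      simp only [hxy, if_neg hxy, rmul_nil]
      exact Relation.ReflTransGen.refl
  | cons z t ih =>
    obtain ⟨β, zm⟩ := z
    obtain ⟨hz1, hbl, hrt⟩ := ht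
    simp only at hz1 hbl
    by_cases hβ : β = α
    · subst hβ
      rw [rmul_cons_same]
      by_cases h1 : zm * x = 1
      · rw [if_pos h1]
        have hblock := rmul_of_blocked G M y hbl
        by_cases hxy : x * y = 1
        · have hzy : zm = y := by
            have : zm * (x * y) = zm := by rw [hxy, mul_one]
            rw [← mul_assoc, h1, one_mul] at this
            exact this.symm
          unfold step
          rw [if_pos hxy]
          rw [hzy]
          exact hblock
        · have hzy : zm * (x * y) = y := by rw [← mul_assoc, h1, one_mul]
          unfold step
          rw [if_neg hxy, rmul_cons_same, if_neg (by rw [hzy]; exact hy), hzy]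
          exact hblock
      · rw [if_neg h1, rmul_cons_same]
        by_cases h2 : zm * x * y = 1
        · rw [if_pos h2]
          have hxy : ¬ x * y = 1 := by
            intro hxy
            apply hz1
            have : zm * (x * y) = zm := by rw [hxy, mul_one]
            rw [← mul_assoc, h2] at this
            exact this.symm
          unfold step
          rw [if_neg hxy, rmul_cons_same, if_pos (by rw [mul_assoc] at h2; exact h2)]
          exact Relation.ReflTransGen.refl
        · rw [if_neg h2]
          by_cases hxy : x * y = 1
          · have : zm * x * y = zm := by rw [mul_assoc, hxy, mul_one]
            unfold step
            rw [if_pos hxy, this]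
            exact Relation.ReflTransGen.refl
          · unfold step
            rw [if_neg hxy, rmul_cons_same,
              if_neg (by rw [← mul_assoc]; exact h2), ← mul_assoc]
            exact Relation.ReflTransGen.refl
    · by_cases hadj : G.Adj α β
      · rw [rmul_cons_pass G M ⟨α, x⟩ zm t hβ hadj,
          rmul_cons_pass G M ⟨α, y⟩ zm _ hβ hadj]
        have hrhs : step G M (⟨β, zm⟩ :: t) ⟨α, x * y⟩
            = ⟨β, zm⟩ :: step G M t ⟨α, x * y⟩ := by
          unfold step
          by_cases hxy : x * y = 1
          · rw [if_pos hxy, if_pos hxy]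
          · rw [if_neg hxy, if_neg hxy, rmul_cons_pass G M ⟨α, x * y⟩ zm t hβ hadj]
        rw [hrhs]
        exact shuffleEquiv_cons G M _ (ih hrt)
      · rw [rmul_cons_stop G M ⟨α, x⟩ zm t hβ hadj, rmul_cons_same]
        unfold step
        by_cases hxy : x * y = 1
        · rw [if_pos hxy, if_pos hxy]
          exact Relation.ReflTransGen.refl
        · rw [if_neg hxy, if_neg hxy, rmul_cons_stop G M ⟨α, x * y⟩ zm t hβ hadj]
          exact Relation.ReflTransGen.refl

lemma step_mul {α : V} (x y : M α) {t : List (GPLetter M)} (ht : RedR G M t) :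
    ShuffleEquiv G M (step G M (step G M t ⟨α, x⟩) ⟨α, y⟩) (step G M t ⟨α, x * y⟩) := by
  by_cases hx : x = 1
  · subst hx
    show ShuffleEquiv G M (step G M (step G M t ⟨α, 1⟩) ⟨α, y⟩) _
    have h1 : step G M t ⟨α, (1 : M α)⟩ = t := if_pos rfl
    rw [h1, one_mul]
    exact Relation.ReflTransGen.refl
  · by_cases hy : y = 1
    · subst hy
      have h1 : step G M (step G M t ⟨α, x⟩) ⟨α, (1 : M α)⟩ = step G M t ⟨α, x⟩ :=
        if_pos rfl
      rw [h1, mul_one]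
      exact Relation.ReflTransGen.refl
    · have e1 : step G M t ⟨α, x⟩ = rmul G M ⟨α, x⟩ t := if_neg hx
      have e2 : ∀ s, step G M s ⟨α, y⟩ = rmul G M ⟨α, y⟩ s := fun s => if_neg hy
      rw [e1, e2]
      exact rmul_rmul G M x y hx hy ht

lemma rmul_comm' {α β : V} (hadj : G.Adj α β) (x : M α) (y : M β)
    (t : List (GPLetter M)) :
    ShuffleEquiv G M (rmul G M ⟨β, y⟩ (rmul G M ⟨α, x⟩ t))
      (rmul G M ⟨α, x⟩ (rmul G M ⟨β, y⟩ t)) := by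
  have hab : α ≠ β := G.ne_of_adj hadj
  induction t with
  | nil =>
    rw [rmul_nil, rmul_nil,
      rmul_cons_pass G M ⟨β, y⟩ x [] (fun h => hab h) hadj.symm,
      rmul_cons_pass G M ⟨α, x⟩ y [] (fun h => hab h.symm) hadj,
      rmul_nil, rmul_nil]
    exact Relation.ReflTransGen.single
      (shuffleStep_swap G M (x := ⟨α, x⟩) (y := ⟨β, y⟩) [] hadj)
  | cons z t ih =>
    obtain ⟨γ, zm⟩ := z
    by_cases hγa : γ = α
    · subst hγa
      rw [rmul_cons_same,
        rmul_cons_pass G M ⟨β, y⟩ zm t (fun h => hab h) hadj.symm]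
      by_cases h1 : zm * x = 1
      · rw [if_pos h1, rmul_cons_same, if_pos h1]
        exact Relation.ReflTransGen.refl
      · rw [if_neg h1, rmul_cons_same, if_neg h1,
          rmul_cons_pass G M ⟨β, y⟩ (zm * x) _ (fun h => hab h) hadj.symm]
        exact Relation.ReflTransGen.refl
    · by_cases hγb : γ = β
      · subst hγb
        rw [rmul_cons_pass G M ⟨α, x⟩ zm t hγa hadj.symm.symm, rmul_cons_same,
          rmul_cons_same]
        by_cases h1 : zm * y = 1
        · rw [if_pos h1, if_pos h1]
          exact Relation.ReflTransGen.refl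
        · rw [if_neg h1, if_neg h1,
            rmul_cons_pass G M ⟨α, x⟩ (zm * y) t hγa hadj.symm.symm]
          exact Relation.ReflTransGen.refl
      · by_cases haγ : G.Adj α γ <;> by_cases hbγ : G.Adj β γ
        · rw [rmul_cons_pass G M ⟨α, x⟩ zm t hγa haγ,
            rmul_cons_pass G M ⟨β, y⟩ zm _ hγb hbγ,
            rmul_cons_pass G M ⟨β, y⟩ zm t hγb hbγ,
            rmul_cons_pass G M ⟨α, x⟩ zm _ hγa haγ]
          exact shuffleEquiv_cons G M _ ih
        · rw [rmul_cons_pass G M ⟨α, x⟩ zm t hγa haγ,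
            rmul_cons_stop G M ⟨β, y⟩ zm _ hγb hbγ,
            rmul_cons_stop G M ⟨β, y⟩ zm t hγb hbγ,
            rmul_cons_pass G M ⟨α, x⟩ y _ (fun h => hab h.symm) hadj,
            rmul_cons_pass G M ⟨α, x⟩ zm t hγa haγ]
          exact Relation.ReflTransGen.refl
        · rw [rmul_cons_stop G M ⟨α, x⟩ zm t hγa haγ,
            rmul_cons_pass G M ⟨β, y⟩ x _ (fun h => hab h) hadj.symm,
            rmul_cons_pass G M ⟨β, y⟩ zm t hγb hbγ,
            rmul_cons_stop G M ⟨α, x⟩ zm _ hγa haγ]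
          exact Relation.ReflTransGen.refl
        · rw [rmul_cons_stop G M ⟨α, x⟩ zm t hγa haγ,
            rmul_cons_pass G M ⟨β, y⟩ x _ (fun h => hab h) hadj.symm,
            rmul_cons_stop G M ⟨β, y⟩ zm t hγb hbγ,
            rmul_cons_pass G M ⟨α, x⟩ y _ (fun h => hab h.symm) hadj,
            rmul_cons_stop G M ⟨α, x⟩ zm t hγa haγ]
          exact Relation.ReflTransGen.single
            (shuffleStep_swap G M (x := ⟨α, x⟩) (y := ⟨β, y⟩) _ hadj)

lemma step_comm {α β : V} (hadj : G.Adj α β) (x : M α) (y : M β)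
    (t : List (GPLetter M)) :
    ShuffleEquiv G M (step G M (step G M t ⟨α, x⟩) ⟨β, y⟩)
      (step G M (step G M t ⟨β, y⟩) ⟨α, x⟩) := by
  by_cases hx : x = 1
  · subst hx
    have h1 : ∀ s, step G M s ⟨α, (1 : M α)⟩ = s := fun s => if_pos rfl
    rw [h1, h1]
    exact Relation.ReflTransGen.refl
  · by_cases hy : y = 1
    · subst hy
      have h1 : ∀ s, step G M s ⟨β, (1 : M β)⟩ = s := fun s => if_pos rfl
      rw [h1, h1]
      exact Relation.ReflTransGen.refl
    · have e1 : ∀ s, step G M s ⟨α, x⟩ = rmul G M ⟨α, x⟩ s := fun s => if_neg hx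
      have e2 : ∀ s, step G M s ⟨β, y⟩ = rmul G M ⟨β, y⟩ s := fun s => if_neg hy
      rw [e1, e2, e1, e2]
      exact rmul_comm' G M hadj x y t

lemma fold_red {t : List (GPLetter M)} (ht : RedR G M t) (l : List (GPLetter M)) :
    RedR G M (List.foldl (step G M) t l) := by
  induction l generalizing t with
  | nil => exact ht
  | cons x l ih => exact ih (red_step G M ht x)

lemma fold_shuffle {t t' : List (GPLetter M)} (h : ShuffleEquiv G M t t')
    (l : List (GPLetter M)) :
    ShuffleEquiv G M (List.foldl (step G M) t l) (List.foldl (step G M) t' l) := by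
  induction l generalizing t t' with
  | nil => exact h
  | cons x l ih => exact ih (step_shuffle G M h x)

lemma mk'_ofList_cons (x : GPLetter M) (l : List (GPLetter M)) :
    (gpCon G M).mk' (FreeMonoid.ofList (x :: l))
      = e G M x * (gpCon G M).mk' (FreeMonoid.ofList l) := by
  rw [show FreeMonoid.ofList (x :: l) = FreeMonoid.of x * FreeMonoid.ofList l from rfl,
    map_mul]
  rfl

lemma val_fold (t : List (GPLetter M)) (l : List (GPLetter M)) :
    val G M (List.foldl (step G M) t l)
      = val G M t * (gpCon G M).mk' (FreeMonoid.ofList l) := by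
  induction l generalizing t with
  | nil =>
    show val G M t = val G M t * (gpCon G M).mk' 1
    rw [map_one, mul_one]
  | cons x l ih =>
    show val G M (List.foldl (step G M) (step G M t x) l) = _
    rw [ih, val_step, mk'_ofList_cons, mul_assoc]

/-- The key congruence used to transport `gpCon` to shuffle equivalence of normal forms. -/
def myCon : Con (FreeMonoid (GPLetter M)) where
  r w w' := ∀ t, RedR G M t →
    ShuffleEquiv G M (List.foldl (step G M) t (FreeMonoid.toList w))
      (List.foldl (step G M) t (FreeMonoid.toList w'))
  iseqv := by
    constructor
    · intro w t _; exact Relation.ReflTransGen.refl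
    · intro w w' h t ht; exact shuffleEquiv_symm G M (h t ht)
    · intro a b c h1 h2 t ht; exact (h1 t ht).trans (h2 t ht)
  mul' := by
    intro a b c d h1 h2 t ht
    rw [FreeMonoid.toList_mul, FreeMonoid.toList_mul, List.foldl_append,
      List.foldl_append]
    have step1 := h2 _ (fold_red G M ht (FreeMonoid.toList a))
    have step2 := fold_shuffle G M (h1 t ht) (FreeMonoid.toList d)
    exact step1.trans step2

lemma gpCon_le_myCon : gpCon G M ≤ myCon G M := by
  apply Con.conGen_le.mpr
  rintro w₁ w₂ (⟨α, h1, h2⟩ | ⟨α, x, y, h1, h2⟩ | ⟨α, β, x, y, hadj, h1, h2⟩) <;>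
    subst h1 <;> subst h2 <;> intro t ht
  · rw [FreeMonoid.toList_of, FreeMonoid.toList_one]
    show ShuffleEquiv G M (step G M t ⟨α, 1⟩) t
    have h1 : step G M t ⟨α, (1 : M α)⟩ = t := if_pos rfl
    rw [h1]
    exact Relation.ReflTransGen.refl
  · rw [FreeMonoid.toList_mul, FreeMonoid.toList_of, FreeMonoid.toList_of]
    exact step_mul G M x y ht
  · rw [FreeMonoid.toList_mul, FreeMonoid.toList_mul, FreeMonoid.toList_of,
      FreeMonoid.toList_of]
    exact step_comm G M hadj x y t
  
lemma normal_form_eq {w w' : FreeMonoid (GPLetter M)}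
    (h : (gpCon G M).mk' w = (gpCon G M).mk' w') :
    ShuffleEquiv G M (List.foldl (step G M) [] (FreeMonoid.toList w))
      (List.foldl (step G M) [] (FreeMonoid.toList w')) := by
  have hcon : gpCon G M w w' := (Con.eq _).mp h
  exact Con.le_def.mp (gpCon_le_myCon G M) hcon [] trivial

lemma qr_swap (b : GPLetter M) (u v : List (GPLetter M)) {x y : GPLetter M}
    (hadj : G.Adj x.1 y.1) (h : QR G M b (u ++ x :: y :: v)) :
    QR G M b (u ++ y :: x :: v) := by
  induction u with
  | nil =>
    rcases h with hm | ⟨hbx, hm | ⟨hby, hq⟩⟩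
    · -- marked letter is x; its support equals b.1, and x is adjacent to y
      rcases hm with ⟨h1, c, hc⟩
      exact Or.inr ⟨h1 ▸ hadj, Or.inl ⟨h1, c, hc⟩⟩
    · exact Or.inl hm
    · exact Or.inr ⟨hby, Or.inr ⟨hbx, hq⟩⟩
  | cons z u ih =>
    rcases h with hm | ⟨hbz, hq⟩
    · exact Or.inl hm
    · exact Or.inr ⟨hbz, ih hq⟩

lemma qr_shuffle {b : GPLetter M} {t t' : List (GPLetter M)}
    (h : ShuffleEquiv G M t t') (hq : QR G M b t) : QR G M b t' := by
  induction h with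
  | refl => exact hq
  | tail _ h2 ih =>
    obtain ⟨u, v, x, y, hadj, h1, h2'⟩ := h2
    subst h1; subst h2'
    exact qr_swap G M b u v hadj ih

lemma qr_rmul {β : V} (bm : M β) (hninv : ∀ c : M β, c * bm ≠ 1)
    (t : List (GPLetter M)) : QR G M ⟨β, bm⟩ (rmul G M ⟨β, bm⟩ t) := by
  induction t with
  | nil => exact Or.inl ⟨rfl, 1, (one_mul bm).symm⟩
  | cons z t ih =>
    obtain ⟨γ, zm⟩ := z
    by_cases hγ : γ = β
    · subst hγ
      rw [rmul_cons_same, if_neg (hninv zm)]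
      exact Or.inl ⟨rfl, zm, rfl⟩
    · by_cases hadj : G.Adj β γ
      · rw [rmul_cons_pass G M ⟨β, bm⟩ zm t hγ hadj]
        exact Or.inr ⟨hadj, ih⟩
      · rw [rmul_cons_stop G M ⟨β, bm⟩ zm t hγ hadj]
        exact Or.inl ⟨rfl, 1, (one_mul bm).symm⟩

lemma qr_extract {β : V} {bm : M β} {N : List (GPLetter M)}
    (h : QR G M ⟨β, bm⟩ N) :
    ∃ (N' : List (GPLetter M)) (c : M β),
      val G M N = val G M N' * e G M ⟨β, c⟩ * e G M ⟨β, bm⟩ ∧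
      ∀ j : GPLetter M, j.1 ≠ β → QR G M j N → QR G M j N' := by
  induction N with
  | nil => exact absurd h id
  | cons z t ih =>
    rcases h with ⟨h1, c, hc⟩ | ⟨hadj, hq⟩
    · obtain ⟨γ, zm⟩ := z
      simp only at h1
      subst h1
      simp only at hc
      refine ⟨t, c, ?_, ?_⟩
      · show val G M t * e G M ⟨γ, zm⟩ = _
        rw [hc, ← e_mul, ← mul_assoc]
      · intro j hj hqj
        rcases hqj with ⟨h2, _⟩ | ⟨_, hq2⟩
        · exact absurd h2 fun h => hj h.symm
        · exact hq2
    · obtain ⟨N', c, hval, hpers⟩ := ih hq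
      refine ⟨z :: N', c, ?_, ?_⟩
      · show val G M t * e G M z = val G M N' * e G M z * e G M ⟨β, c⟩ * e G M ⟨β, bm⟩
        have h1 : e G M ⟨β, c⟩ * e G M ⟨β, bm⟩ * e G M z
            = e G M z * (e G M ⟨β, c⟩ * e G M ⟨β, bm⟩) := by
          rw [mul_assoc, e_comm G M (x := (⟨β, bm⟩ : GPLetter M)) (y := z) hadj,
            ← mul_assoc, e_comm G M (x := (⟨β, c⟩ : GPLetter M)) (y := z) hadj,
            mul_assoc]
        rw [hval, mul_assoc (val G M N'), mul_assoc (val G M N'), h1,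
          ← mul_assoc, ← mul_assoc]
      · intro j hj hqj
        rcases hqj with hm | ⟨hadjj, hq2⟩
        · exact Or.inl hm
        · exact Or.inr ⟨hadjj, hpers j hj hq2⟩

lemma comm_prod {β : V} (c : M β) (l : List (GPLetter M))
    (hl : ∀ k ∈ l, G.Adj β k.1) :
    e G M ⟨β, c⟩ * (l.map (e G M)).prod = (l.map (e G M)).prod * e G M ⟨β, c⟩ := by
  induction l with
  | nil => simp
  | cons k l ih =>
    simp only [List.map_cons, List.prod_cons]
    rw [← mul_assoc, e_comm G M (x := (⟨β, c⟩ : GPLetter M)) (y := k) (hl k (by simp)),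
      mul_assoc, ih (fun k hk => hl k (by simp [hk])), ← mul_assoc]

lemma ext_block (bs : List (GPLetter M))
    (hpw : List.Pairwise (fun p q => G.Adj p.1 q.1) bs) (N : List (GPLetter M))
    (hq : ∀ b ∈ bs, QR G M b N) :
    ∃ h : GraphProduct G M, val G M N = h * (bs.map (e G M)).prod := by
  induction bs using List.reverseRecOn generalizing N with
  | nil => exact ⟨val G M N, by simp⟩
  | append_singleton bs b ih =>
    have hpw' := List.pairwise_append.mp hpw
    have hqb : QR G M b N := hq b (by simp)
    obtain ⟨β, bm⟩ := b
    obtain ⟨N', c, hval, hpers⟩ := qr_extract G M hqb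
    have hadjall : ∀ j ∈ bs, G.Adj j.1 β :=
      fun j hj => hpw'.2.2 j hj ⟨β, bm⟩ (by simp)
    have hq' : ∀ j ∈ bs, QR G M j N' := fun j hj =>
      hpers j (G.ne_of_adj (hadjall j hj)) (hq j (by simp [hj]))
    obtain ⟨h, hN'⟩ := ih hpw'.1 N' hq'
    refine ⟨h * e G M ⟨β, c⟩, ?_⟩
    have hcomm : e G M ⟨β, c⟩ * (bs.map (e G M)).prod
        = (bs.map (e G M)).prod * e G M ⟨β, c⟩ :=
      comm_prod G M c bs (fun k hk => (hadjall k hk).symm)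
    rw [hval, hN', List.map_append, List.prod_append, List.map_singleton,
      List.prod_singleton, mul_assoc h, ← hcomm, ← mul_assoc,
      mul_assoc (h * e G M ⟨β, c⟩)]

lemma gpMk_prod (l : List (GPLetter M)) :
    gpMk G M l = (l.map (e G M)).prod := by
  induction l with
  | nil =>
    show (gpCon G M).mk' (FreeMonoid.ofList []) = _
    rw [show FreeMonoid.ofList ([] : List (GPLetter M)) = 1 from rfl, map_one,
      List.map_nil, List.prod_nil]
  | cons x l ih =>
    show (gpCon G M).mk' (FreeMonoid.ofList (x :: l)) = _
    rw [mk'_ofList_cons, show (gpCon G M).mk' (FreeMonoid.ofList l) = gpMk G M l from rfl,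
      ih, List.map_cons, List.prod_cons]

lemma supp_ne {a : List (GPLetter M)} (ha : CompleteBlock G M a) :
    ∀ i j : Fin a.length, i < j → (a.get i).1 ≠ (a.get j).1 := by
  suffices H : ∀ n, ∀ i j : Fin a.length, i < j → (j : ℕ) - i = n →
      (a.get i).1 ≠ (a.get j).1 by
    intro i j hij
    exact H ((j : ℕ) - i) i j hij rfl
  intro n
  induction n using Nat.strong_induction_on with
  | _ n IH =>
    intro i j hij hd heq
    obtain ⟨k, hik, hkj, hna⟩ := ha.1.2 i j hij heq
    have hsk : (a.get i).1 = (a.get k).1 := by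
      by_contra hne
      exact hna (ha.2 _ (a.get_mem i) _ (a.get_mem k) hne)
    have hlt : (k : ℕ) - i < n := by
      have h1 : (i : ℕ) < k := hik
      have h2 : (k : ℕ) < j := hkj
      omega
    exact IH _ hlt i k hik rfl hsk

lemma pairwise_adj {a : List (GPLetter M)} (ha : CompleteBlock G M a) :
    List.Pairwise (fun p q => G.Adj p.1 q.1) a := by
  rw [List.pairwise_iff_get]
  intro i j hij
  exact ha.2 _ (a.get_mem i) _ (a.get_mem j) (supp_ne G M ha i j hij)

lemma gpMk_peel {a : List (GPLetter M)} (ha : CompleteBlock G M a) (i : Fin a.length) :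
    gpMk G M a = gpMk G M (a.take i ++ a.drop (i + 1)) * e G M (a.get i) := by
  have hdrop : a.drop i = a.get i :: a.drop (i + 1) := by
    rw [List.drop_eq_getElem_cons i.isLt, List.get_eq_getElem]
  have hcomm : ∀ k ∈ a.drop ((i : ℕ) + 1), G.Adj (a.get i).1 k.1 := by
    intro k hk
    obtain ⟨j, hj, rfl⟩ := List.mem_iff_getElem.mp hk
    have hlen : (i : ℕ) + 1 + j < a.length := by
      simp only [List.length_drop] at hj
      omega
    rw [List.getElem_drop]
    have hne := supp_ne G M ha i ⟨(i : ℕ) + 1 + j, hlen⟩ (by simp [Fin.lt_def]; omega)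
    have := ha.2 _ (a.get_mem i) _ (a.get_mem ⟨_, hlen⟩) hne
    simpa [List.get_eq_getElem] using this
  have hsplit : (a.map (e G M)).prod
      = ((a.take (i : ℕ)).map (e G M)).prod *
        (e G M (a.get i) * ((a.drop ((i : ℕ) + 1)).map (e G M)).prod) := by
    conv_lhs => rw [← List.take_append_drop (i : ℕ) a, hdrop]
    rw [List.map_append, List.prod_append, List.map_cons, List.prod_cons]
  have hswap : e G M (a.get i) * ((a.drop ((i : ℕ) + 1)).map (e G M)).prod
      = ((a.drop ((i : ℕ) + 1)).map (e G M)).prod * e G M (a.get i) :=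
    comm_prod G M (β := (a.get i).1) (a.get i).2 _ hcomm
  rw [gpMk_prod, gpMk_prod, hsplit, hswap, List.map_append, List.prod_append,
    ← mul_assoc]

end Stmt5

/-- the principal left ideal of a complete block with no left invertible
letters is the intersection of the principal left ideals of its letters. -/
theorem stmt5 {V : Type*} (G : SimpleGraph V) (M : V → Type*) [∀ α, Monoid (M α)]
    (a : List (GPLetter M)) (ha : CompleteBlock G M a)
    (hinv : ∀ x ∈ a, ¬ LeftInvertibleLetter M x) :
    plIdeal (gpMk G M a) = ⋂ i : Fin a.length, plIdeal (gpMk G M [a.get i]) := by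
  have hmk_single : ∀ x : GPLetter M, gpMk G M [x] = Stmt5.e G M x := by
    intro x
    rw [Stmt5.gpMk_prod]
    simp
  ext g
  simp only [Set.mem_iInter, plIdeal, Set.mem_range]
  constructor
  · rintro ⟨y, rfl⟩ i
    refine ⟨y * gpMk G M (a.take i ++ a.drop (i + 1)), ?_⟩
    rw [hmk_single, mul_assoc, ← Stmt5.gpMk_peel G M ha i]
  · intro hg
    obtain ⟨w, hw⟩ := Con.mk'_surjective (c := gpCon G M) g
    have hvalN : Stmt5.val G M (List.foldl (Stmt5.step G M) [] (FreeMonoid.toList w))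
        = g := by
      rw [Stmt5.val_fold]
      show 1 * (gpCon G M).mk' (FreeMonoid.ofList (FreeMonoid.toList w)) = g
      rw [one_mul]
      exact hw
    have hqall : ∀ i : Fin a.length,
        Stmt5.QR G M (a.get i) (List.foldl (Stmt5.step G M) [] (FreeMonoid.toList w)) := by
      intro i
      obtain ⟨s, hs⟩ := hg i
      obtain ⟨u, hu⟩ := Con.mk'_surjective (c := gpCon G M) s
      have hb1 : (a.get i).2 ≠ 1 := ha.1.1 _ (a.get_mem i)
      have hmk2 : (gpCon G M).mk' (u * FreeMonoid.of (a.get i))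
          = (gpCon G M).mk' w := by
        rw [map_mul, hu, hw, ← hs, hmk_single]
        rfl
      have hsh := Stmt5.normal_form_eq G M hmk2
      rw [FreeMonoid.toList_mul, FreeMonoid.toList_of, List.foldl_append] at hsh
      simp only [List.foldl_cons, List.foldl_nil] at hsh
      have hstep : Stmt5.step G M
          (List.foldl (Stmt5.step G M) [] (FreeMonoid.toList u)) (a.get i)
          = Stmt5.rmul G M (a.get i)
            (List.foldl (Stmt5.step G M) [] (FreeMonoid.toList u)) := if_neg hb1
      rw [hstep] at hsh
      have hninv : ∀ c : M (a.get i).1, c * (a.get i).2 ≠ 1 :=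
        fun c hc => hinv _ (a.get_mem i) ⟨c, hc⟩
      have hq0 := Stmt5.qr_rmul G M (β := (a.get i).1) (a.get i).2 hninv
        (List.foldl (Stmt5.step G M) [] (FreeMonoid.toList u))
      exact Stmt5.qr_shuffle G M hsh hq0
    obtain ⟨h, hval⟩ := Stmt5.ext_block G M a (Stmt5.pairwise_adj G M ha) _
      (fun b hb => by
        obtain ⟨i, hi⟩ := List.mem_iff_get.mp hb
        exact hi ▸ hqall i)
    exact ⟨h, by rw [← hvalN, hval, ← Stmt5.gpMk_prod]⟩
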